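/- The ℂ-algebra ℂ[y₁,y₂,y₃]/(3y₁²y₂ + y₃², y₁³ + 3y₂², y₁y₃), the Jacobian algebra of x³y + y³ + xz², has ℂ-dimension 11. -/

import Mathlib

open MvPolynomial

noncomputable section

abbrev R3 : Type := MvPolynomial (Fin 3) ℂ

/-- The Jacobian ideal of the `Q₁₁` polynomial `x³y + y³ + xz²`
(after removing harmless scalar factors): `3y₁²y₂ + y₃²`, `y₁³ + 3y₂²`, `y₁y₃`. -/
def J8 : Ideal R3 :=
  Ideal.span {3 * X 0 ^ 2 * X 1 + X 2 ^ 2, X 0 ^ 3 + 3 * X 1 ^ 2, X 0 * X 2}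

def F (a b c : ℕ) : Fin 3 →₀ ℕ := Finsupp.single 0 a + Finsupp.single 1 b + Finsupp.single 2 c

@[simp] lemma F_apply0 (a b c : ℕ) : F a b c 0 = a := by simp [F, Finsupp.single_apply]
@[simp] lemma F_apply1 (a b c : ℕ) : F a b c 1 = b := by simp [F, Finsupp.single_apply]
@[simp] lemma F_apply2 (a b c : ℕ) : F a b c 2 = c := by simp [F, Finsupp.single_apply]

lemma F_eval (e : Fin 3 →₀ ℕ) : e = F (e 0) (e 1) (e 2) := by
  ext i; fin_cases i <;> simp

@[simp] lemma F_eq_iff (a b c a' b' c' : ℕ) : F a b c = F a' b' c' ↔ a = a' ∧ b = b' ∧ c = c' := by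
  constructor
  · intro h
    exact ⟨by rw [← F_apply0 a b c, h, F_apply0], by rw [← F_apply1 a b c, h, F_apply1],
      by rw [← F_apply2 a b c, h, F_apply2]⟩
  · rintro ⟨rfl, rfl, rfl⟩; rfl

@[simp] lemma F_le_iff (a b c a' b' c' : ℕ) : F a b c ≤ F a' b' c' ↔ a ≤ a' ∧ b ≤ b' ∧ c ≤ c' := by
  rw [Finsupp.le_def]
  constructor
  · intro h; exact ⟨by simpa using h 0, by simpa using h 1, by simpa using h 2⟩
  · rintro ⟨h1, h2, h3⟩ i; fin_cases i <;> simpa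

@[simp] lemma F_sub (a b c a' b' c' : ℕ) : F a' b' c' - F a b c = F (a'-a) (b'-b) (c'-c) := by
  ext i; rw [Finsupp.tsub_apply]; fin_cases i <;> simp

lemma F_add (a b c a' b' c' : ℕ) : F a b c + F a' b' c' = F (a+a') (b+b') (c+c') := by
  ext i; fin_cases i <;> simp

lemma mono_eq (a b c : ℕ) : (X 0 ^ a * X 1 ^ b * X 2 ^ c : R3) = monomial (F a b c) 1 := by
  rw [X_pow_eq_monomial, X_pow_eq_monomial, X_pow_eq_monomial, monomial_mul, monomial_mul]
  simp [F]


lemma g1_eq : (3 * X 0 ^ 2 * X 1 + X 2 ^ 2 : R3)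
    = monomial (F 2 1 0) 3 + monomial (F 0 0 2) 1 := by
  have h1 : (3 * X 0 ^ 2 * X 1 : R3) = C 3 * (X 0 ^ 2 * X 1 ^ 1 * X 2 ^ 0) := by
    rw [map_ofNat]; ring
  have h2 : (X 2 ^ 2 : R3) = X 0 ^ 0 * X 1 ^ 0 * X 2 ^ 2 := by ring
  rw [h1, h2, mono_eq, mono_eq, C_mul_monomial, mul_one]

lemma g2_eq : (X 0 ^ 3 + 3 * X 1 ^ 2 : R3)
    = monomial (F 3 0 0) 1 + monomial (F 0 2 0) 3 := by
  have h1 : (3 * X 1 ^ 2 : R3) = C 3 * (X 0 ^ 0 * X 1 ^ 2 * X 2 ^ 0) := by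
    rw [map_ofNat]; ring
  have h2 : (X 0 ^ 3 : R3) = X 0 ^ 3 * X 1 ^ 0 * X 2 ^ 0 := by ring
  rw [h1, h2, mono_eq, mono_eq, C_mul_monomial, mul_one]

lemma g3_eq : (X 0 * X 2 : R3) = monomial (F 1 0 1) 1 := by
  have h2 : (X 0 * X 2 : R3) = X 0 ^ 1 * X 1 ^ 0 * X 2 ^ 1 := by ring
  rw [h2, mono_eq]

lemma kill_gen (L : R3 → ℂ) (hadd : ∀ p q, L (p + q) = L p + L q)
    (h1 : ∀ r : R3, L (r * (3 * X 0 ^ 2 * X 1 + X 2 ^ 2)) = 0)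
    (h2 : ∀ r : R3, L (r * (X 0 ^ 3 + 3 * X 1 ^ 2)) = 0)
    (h3 : ∀ r : R3, L (r * (X 0 * X 2)) = 0) :
    ∀ p ∈ J8, L p = 0 := by
  have h0 : L 0 = 0 := by have := hadd 0 0; simpa using this.symm
  intro p hp
  have key : ∀ r : R3, L (r * p) = 0 := by
    refine Submodule.span_induction (p := fun x _ => ∀ r : R3, L (r * x) = 0)
      ?_ ?_ ?_ ?_ hp
    · intro x hx
      rcases hx with h | h | h <;> subst h
      · exact h1
      · exact h2
      · exact h3
    · intro r; rw [mul_zero]; exact h0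
    · intro x y _ _ hx hy r; rw [mul_add, hadd, hx r, hy r, add_zero]
    · intro a x _ hx r; rw [smul_eq_mul, ← mul_assoc]; exact hx (r * a)
  simpa using key 1

lemma kill_single (m : Fin 3 →₀ ℕ) (k1 : ¬ F 2 1 0 ≤ m) (k2 : ¬ F 0 0 2 ≤ m)
    (k3 : ¬ F 3 0 0 ≤ m) (k4 : ¬ F 0 2 0 ≤ m) (k5 : ¬ F 1 0 1 ≤ m) :
    ∀ p ∈ J8, coeff m p = 0 := by
  refine kill_gen _ (fun p q => coeff_add m p q) ?_ ?_ ?_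
  · intro r
    rw [g1_eq, mul_add, coeff_add, coeff_mul_monomial', coeff_mul_monomial',
      if_neg k1, if_neg k2, add_zero]
  · intro r
    rw [g2_eq, mul_add, coeff_add, coeff_mul_monomial', coeff_mul_monomial',
      if_neg k3, if_neg k4, add_zero]
  · intro r
    rw [g3_eq, coeff_mul_monomial', if_neg k5]

lemma kill_y2 : ∀ p ∈ J8, coeff (F 0 2 0) p - 3 * coeff (F 3 0 0) p = 0 := by
  refine kill_gen (fun p => coeff (F 0 2 0) p - 3 * coeff (F 3 0 0) p)
    (fun p q => by simp [coeff_add]; ring) ?_ ?_ ?_ <;> intro r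
  · rw [g1_eq]; simp [mul_add, coeff_add, coeff_mul_monomial']
  · rw [g2_eq]; simp [mul_add, coeff_add, coeff_mul_monomial']; ring
  · rw [g3_eq]; simp [coeff_mul_monomial']

lemma kill_z2 : ∀ p ∈ J8, coeff (F 0 0 2) p - (3:ℂ)⁻¹ * coeff (F 2 1 0) p = 0 := by
  refine kill_gen (fun p => coeff (F 0 0 2) p - (3:ℂ)⁻¹ * coeff (F 2 1 0) p)
    (fun p q => by simp [coeff_add]; ring) ?_ ?_ ?_ <;> intro r
  · rw [g1_eq]; simp [mul_add, coeff_add, coeff_mul_monomial']; ring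
  · rw [g2_eq]; simp [mul_add, coeff_add, coeff_mul_monomial']
  · rw [g3_eq]; simp [coeff_mul_monomial']

lemma kill_xy2 : ∀ p ∈ J8, coeff (F 1 2 0) p - 3 * coeff (F 4 0 0) p = 0 := by
  refine kill_gen (fun p => coeff (F 1 2 0) p - 3 * coeff (F 4 0 0) p)
    (fun p q => by simp [coeff_add]; ring) ?_ ?_ ?_ <;> intro r
  · rw [g1_eq]; simp [mul_add, coeff_add, coeff_mul_monomial']
  · rw [g2_eq]; simp [mul_add, coeff_add, coeff_mul_monomial']; ring
  · rw [g3_eq]; simp [coeff_mul_monomial']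

lemma kill_yz2 : ∀ p ∈ J8,
    coeff (F 0 1 2) p - (3:ℂ)⁻¹ * coeff (F 2 2 0) p + coeff (F 5 0 0) p = 0 := by
  refine kill_gen (fun p => coeff (F 0 1 2) p - (3:ℂ)⁻¹ * coeff (F 2 2 0) p + coeff (F 5 0 0) p)
    (fun p q => by simp [coeff_add]; ring) ?_ ?_ ?_ <;> intro r
  · rw [g1_eq]; simp [mul_add, coeff_add, coeff_mul_monomial']; ring
  · rw [g2_eq]; simp [mul_add, coeff_add, coeff_mul_monomial']; ring
  · rw [g3_eq]; simp [coeff_mul_monomial']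

def EE : Fin 11 → (Fin 3 →₀ ℕ) :=
  ![F 0 0 0, F 1 0 0, F 0 1 0, F 0 0 1, F 2 0 0, F 1 1 0, F 0 2 0, F 0 1 1, F 0 0 2,
    F 1 2 0, F 0 1 2]

def B : Fin 11 → R3 := fun i => monomial (EE i) 1

def bq : Fin 11 → R3 ⧸ J8 := fun i => Ideal.Quotient.mkₐ ℂ J8 (B i)

lemma coeffSum (g : Fin 11 → ℂ) (m : Fin 3 →₀ ℕ) :
    coeff m (∑ i, g i • B i) = ∑ i, g i * (if EE i = m then 1 else 0) := by
  rw [MvPolynomial.coeff_sum]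
  exact Finset.sum_congr rfl fun i _ => by rw [coeff_smul, B, coeff_monomial, smul_eq_mul]

lemma indep : LinearIndependent ℂ bq := by
  rw [Fintype.linearIndependent_iff]
  intro g hg
  have hmem : (∑ i, g i • B i) ∈ J8 := by
    rw [← Ideal.Quotient.eq_zero_iff_mem]
    have h2 : Ideal.Quotient.mkₐ ℂ J8 (∑ i, g i • B i) = 0 := by
      rw [map_sum]; simp only [map_smul]; exact hg
    rw [Ideal.Quotient.mkₐ_eq_mk] at h2; exact h2
  intro i
  fin_cases i
  · have := kill_single (F 0 0 0) (by simp) (by simp) (by simp) (by simp) (by simp)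
      _ hmem
    rw [coeffSum] at this
    simpa [Fin.sum_univ_succ, EE] using this
  · have := kill_single (F 1 0 0) (by simp) (by simp) (by simp) (by simp) (by simp)
      _ hmem
    rw [coeffSum] at this
    simpa [Fin.sum_univ_succ, EE] using this
  · have := kill_single (F 0 1 0) (by simp) (by simp) (by simp) (by simp) (by simp)
      _ hmem
    rw [coeffSum] at this
    simpa [Fin.sum_univ_succ, EE] using this
  · have := kill_single (F 0 0 1) (by simp) (by simp) (by simp) (by simp) (by simp)
      _ hmem
    rw [coeffSum] at this
    simpa [Fin.sum_univ_succ, EE] using this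
  · have := kill_single (F 2 0 0) (by simp) (by simp) (by simp) (by simp) (by simp)
      _ hmem
    rw [coeffSum] at this
    simpa [Fin.sum_univ_succ, EE] using this
  · have := kill_single (F 1 1 0) (by simp) (by simp) (by simp) (by simp) (by simp)
      _ hmem
    rw [coeffSum] at this
    simpa [Fin.sum_univ_succ, EE] using this
  · have := kill_y2 _ hmem
    rw [coeffSum, coeffSum] at this
    simpa [Fin.sum_univ_succ, EE] using this
  · have := kill_single (F 0 1 1) (by simp) (by simp) (by simp) (by simp) (by simp)
      _ hmem
    rw [coeffSum] at this
    simpa [Fin.sum_univ_succ, EE] using this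
  · have := kill_z2 _ hmem
    rw [coeffSum, coeffSum] at this
    simpa [Fin.sum_univ_succ, EE] using this
  · have := kill_xy2 _ hmem
    rw [coeffSum, coeffSum] at this
    simpa [Fin.sum_univ_succ, EE] using this
  · have := kill_yz2 _ hmem
    rw [coeffSum, coeffSum, coeffSum] at this
    simpa [Fin.sum_univ_succ, EE] using this

lemma g1_mem : (3 * X 0 ^ 2 * X 1 + X 2 ^ 2 : R3) ∈ J8 :=
  Ideal.subset_span (by left; rfl)
lemma g2_mem : (X 0 ^ 3 + 3 * X 1 ^ 2 : R3) ∈ J8 :=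
  Ideal.subset_span (by right; left; rfl)
lemma g3_mem : (X 0 * X 2 : R3) ∈ J8 :=
  Ideal.subset_span (by right; right; rfl)

lemma z3_mem : (X 2 ^ 3 : R3) ∈ J8 := by
  rw [show (X 2 ^ 3 : R3) = X 2 * (3 * X 0 ^ 2 * X 1 + X 2 ^ 2)
      - 3 * X 0 * X 1 * (X 0 * X 2) by ring]
  exact sub_mem (Ideal.mul_mem_left _ _ g1_mem) (Ideal.mul_mem_left _ _ g3_mem)

lemma y3_mem : (X 1 ^ 3 : R3) ∈ J8 := by
  have h9 : (9 * X 1 ^ 3 : R3) ∈ J8 := by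
    rw [show (9 * X 1 ^ 3 : R3) = 3 * X 1 * (X 0 ^ 3 + 3 * X 1 ^ 2)
        - X 0 * (3 * X 0 ^ 2 * X 1 + X 2 ^ 2) + X 2 * (X 0 * X 2) by ring]
    exact add_mem (sub_mem (Ideal.mul_mem_left _ _ g2_mem) (Ideal.mul_mem_left _ _ g1_mem))
      (Ideal.mul_mem_left _ _ g3_mem)
  have : (X 1 ^ 3 : R3) = C (9:ℂ)⁻¹ * (9 * X 1 ^ 3) := by
    rw [show ((9 : R3)) = C (9:ℂ) from (map_ofNat C 9).symm, ← mul_assoc, ← C_mul]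
    norm_num
  rw [this]; exact Ideal.mul_mem_left _ _ h9

lemma y2z_mem : (X 1 ^ 2 * X 2 : R3) ∈ J8 := by
  have h3 : (3 * (X 1 ^ 2 * X 2) : R3) ∈ J8 := by
    rw [show (3 * (X 1 ^ 2 * X 2) : R3) = X 2 * (X 0 ^ 3 + 3 * X 1 ^ 2)
        - X 0 ^ 2 * (X 0 * X 2) by ring]
    exact sub_mem (Ideal.mul_mem_left _ _ g2_mem) (Ideal.mul_mem_left _ _ g3_mem)
  have : (X 1 ^ 2 * X 2 : R3) = C (3:ℂ)⁻¹ * (3 * (X 1 ^ 2 * X 2)) := by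
    rw [show ((3 : R3)) = C (3:ℂ) from (map_ofNat C 3).symm, ← mul_assoc, ← C_mul]
    norm_num
  rw [this]; exact Ideal.mul_mem_left _ _ h3

abbrev mkA : R3 →ₐ[ℂ] R3 ⧸ J8 := Ideal.Quotient.mkₐ ℂ J8

abbrev SS : Submodule ℂ (R3 ⧸ J8) := Submodule.span ℂ (Set.range bq)

lemma mk_zero_of_mem {p : R3} (h : p ∈ J8) : mkA p = 0 := by
  rw [Ideal.Quotient.mkₐ_eq_mk]
  exact Ideal.Quotient.eq_zero_iff_mem.mpr h

lemma helper1 {p q : R3} (h : p + 3 * q ∈ J8) : mkA p = (-3 : ℂ) • mkA q := by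
  have h0 : mkA p + (3 : ℂ) • mkA q = 0 := by
    have := mk_zero_of_mem h
    rw [map_add, show ((3:R3)) = C (3:ℂ) from (map_ofNat C 3).symm, C_mul',
      map_smul] at this
    exact this
  have := eq_neg_of_add_eq_zero_left h0
  rw [this, ← neg_smul]

lemma helper2 {p q : R3} (h : 3 * p + q ∈ J8) : mkA p = (-(3:ℂ)⁻¹) • mkA q := by
  have h0 : (3 : ℂ) • mkA p + mkA q = 0 := by
    have := mk_zero_of_mem h
    rw [map_add, show ((3:R3)) = C (3:ℂ) from (map_ofNat C 3).symm, C_mul',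
      map_smul] at this
    exact this
  have h1 : (3 : ℂ) • mkA p = -mkA q := eq_neg_of_add_eq_zero_left h0
  have h2 : mkA p = (3:ℂ)⁻¹ • ((3:ℂ) • mkA p) := by
    rw [smul_smul]; norm_num
  rw [h2, h1, smul_neg, ← neg_smul]

lemma term_mem (a b c : ℕ) (i : Fin 11) (h : EE i = F a b c) :
    mkA (X 0 ^ a * X 1 ^ b * X 2 ^ c) ∈ SS :=
  Submodule.subset_span ⟨i, by rw [bq, B, mono_eq, h]⟩

lemma zero_case {p q : R3} (h : q ∈ J8) (e : p = q ∨ ∃ r, p = r * q) : mkA p ∈ SS := by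
  have hp : p ∈ J8 := by
    rcases e with rfl | ⟨r, rfl⟩
    · exact h
    · exact Ideal.mul_mem_left _ _ h
  rw [mk_zero_of_mem hp]; exact Submodule.zero_mem _

lemma mono_span : ∀ n a b c : ℕ, a + b + c ≤ n → mkA (X 0 ^ a * X 1 ^ b * X 2 ^ c) ∈ SS := by
  intro n
  induction n with
  | zero =>
    intro a b c h
    have ha : a = 0 := by omega
    have hb : b = 0 := by omega
    have hc : c = 0 := by omega
    subst ha; subst hb; subst hc
    exact term_mem 0 0 0 0 rfl
  | succ n IH =>
    intro a b c h
    rcases c with _ | c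
    · rcases a with _ | _ | _ | a
      · -- a = 0
        rcases b with _ | _ | _ | b
        · exact term_mem 0 0 0 0 rfl
        · exact term_mem 0 1 0 2 rfl
        · exact term_mem 0 2 0 6 rfl
        · refine zero_case y3_mem (Or.inr ⟨X 0 ^ 0 * X 1 ^ b * X 2 ^ 0, by ring⟩)
      · -- a = 1
        rcases b with _ | _ | _ | b
        · exact term_mem 1 0 0 1 rfl
        · exact term_mem 1 1 0 5 rfl
        · exact term_mem 1 2 0 9 rfl
        · exact zero_case y3_mem (Or.inr ⟨X 0 * X 1 ^ b, by ring⟩)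
      · -- a = 2
        rcases b with _ | b
        · exact term_mem 2 0 0 4 rfl
        · -- x² y^(b+1) → -1/3 y^b z²
          have hm : (3 * (X 0 ^ 2 * X 1 ^ (b+1) * X 2 ^ 0) + X 0 ^ 0 * X 1 ^ b * X 2 ^ 2 : R3)
              ∈ J8 := by
            rw [show (3 * (X 0 ^ 2 * X 1 ^ (b+1) * X 2 ^ 0) + X 0 ^ 0 * X 1 ^ b * X 2 ^ 2 : R3)
                = X 1 ^ b * (3 * X 0 ^ 2 * X 1 + X 2 ^ 2) by ring]
            exact Ideal.mul_mem_left _ _ g1_mem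
          rw [helper2 hm]
          exact Submodule.smul_mem _ _ (IH 0 b 2 (by omega))
      · -- a + 3
        have hm : (X 0 ^ (a+3) * X 1 ^ b * X 2 ^ 0 + 3 * (X 0 ^ a * X 1 ^ (b+2) * X 2 ^ 0) : R3)
            ∈ J8 := by
          rw [show (X 0 ^ (a+3) * X 1 ^ b * X 2 ^ 0 + 3 * (X 0 ^ a * X 1 ^ (b+2) * X 2 ^ 0) : R3)
              = X 0 ^ a * X 1 ^ b * (X 0 ^ 3 + 3 * X 1 ^ 2) by ring]
          exact Ideal.mul_mem_left _ _ g2_mem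
        rw [helper1 hm]
        exact Submodule.smul_mem _ _ (IH a (b+2) 0 (by omega))
    · -- c = c' + 1
      rcases a with _ | a
      · rcases b with _ | _ | b
        · -- b = 0 : z^(c+1)
          rcases c with _ | _ | c
          · exact term_mem 0 0 1 3 rfl
          · exact term_mem 0 0 2 8 rfl
          · exact zero_case z3_mem (Or.inr ⟨X 2 ^ c, by ring⟩)
        · -- b = 1 : y z^(c+1)
          rcases c with _ | _ | c
          · exact term_mem 0 1 1 7 rfl
          · exact term_mem 0 1 2 10 rfl
          · exact zero_case z3_mem (Or.inr ⟨X 1 * X 2 ^ c, by ring⟩)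
        · -- b ≥ 2 : contains y² z
          exact zero_case y2z_mem (Or.inr ⟨X 1 ^ b * X 2 ^ c, by ring⟩)
      · -- a ≥ 1, c ≥ 1 : contains xz
        exact zero_case g3_mem (Or.inr ⟨X 0 ^ a * X 1 ^ b * X 2 ^ c, by ring⟩)

lemma span_top : ∀ x : R3 ⧸ J8, x ∈ SS := by
  intro x
  obtain ⟨p, rfl⟩ := Ideal.Quotient.mkₐ_surjective ℂ (I := J8) x
  induction p using MvPolynomial.induction_on' with
  | monomial u a =>
    have h1 : (monomial u a : R3) = a • monomial u 1 := by
      rw [smul_monomial, smul_eq_mul, mul_one]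
    rw [h1, map_smul]
    refine Submodule.smul_mem _ _ ?_
    have h2 := mono_span (u 0 + u 1 + u 2) (u 0) (u 1) (u 2) le_rfl
    rw [mono_eq] at h2
    rwa [show u = F (u 0) (u 1) (u 2) from F_eval u]
  | add p q hp hq => rw [map_add]; exact add_mem hp hq

/-- The Jacobian algebra of `x³y + y³ + xz²` has `ℂ`-dimension `11`. -/
theorem stmt8 : Module.finrank ℂ (R3 ⧸ J8) = 11 := by
  have bB : Module.Basis (Fin 11) ℂ (R3 ⧸ J8) := Module.Basis.mk indep (fun x _ => span_top x)
  rw [Module.finrank_eq_card_basis bB, Fintype.card_fin]
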